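/- Let φ: ℝ^d → (-∞, +∞] be a closed function of Legendre type and let ϕ: ℝ^d → (-∞, +∞] be proper, closed and convex with int(dom φ) ∩ dom ϕ ≠ ∅. Assume one of φ, ϕ is coercive (its sublevel sets are bounded) and the other is bounded below. Then the problem min{ φ(y) + ϕ(y) : y ∈ ℝ^d } has a unique solution y*, and moreover y* ∈ int(dom φ) ∩ dom ϕ. -/

import Mathlib

open scoped RealInnerProductSpace
open Filter Topology

variable {d : ℕ}

/-- Effective domain of an extended-real-valued function. -/
def edom (φ : EuclideanSpace ℝ (Fin d) → EReal) : Set (EuclideanSpace ℝ (Fin d)) :=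
  {x | φ x ≠ ⊤}

/-- The finite (real-valued) representative of `φ`. -/
noncomputable def fin (φ : EuclideanSpace ℝ (Fin d) → EReal) :
    EuclideanSpace ℝ (Fin d) → ℝ := fun x => (φ x).toReal

/-- Properness: never `⊥` and not identically `⊤`. -/
def IsProperFn (φ : EuclideanSpace ℝ (Fin d) → EReal) : Prop :=
  (∀ x, φ x ≠ ⊥) ∧ (edom φ).Nonempty

/-- Convexity of an extended-real-valued (nowhere `⊥`) function. -/
def IsConvexFn (φ : EuclideanSpace ℝ (Fin d) → EReal) : Prop :=
  ∀ x y : EuclideanSpace ℝ (Fin d), ∀ a b : ℝ, 0 ≤ a → 0 ≤ b → a + b = 1 →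
    φ (a • x + b • y) ≤ (a : EReal) * φ x + (b : EReal) * φ y

/-- Essential smoothness: the interior of the domain is nonempty, the function is
differentiable there, and gradients blow up along sequences converging to a
boundary point of the domain (steepness). -/
def EssentiallySmooth (φ : EuclideanSpace ℝ (Fin d) → EReal) : Prop :=
  (interior (edom φ)).Nonempty ∧
  (∀ x ∈ interior (edom φ), DifferentiableAt ℝ (fin φ) x) ∧
  (∀ (x : ℕ → EuclideanSpace ℝ (Fin d)) (x' : EuclideanSpace ℝ (Fin d)),
    (∀ k, x k ∈ interior (edom φ)) → Tendsto x atTop (𝓝 x') →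
      x' ∈ frontier (edom φ) →
        Tendsto (fun k => ‖gradient (fin φ) (x k)‖) atTop atTop)

/-- A function of Legendre type: essentially smooth and strictly convex on the
interior of its domain. -/
def LegendreType (φ : EuclideanSpace ℝ (Fin d) → EReal) : Prop :=
  EssentiallySmooth φ ∧ StrictConvexOn ℝ (interior (edom φ)) (fin φ)

/-- Closedness: lower semicontinuity. -/
def IsClosedFn (φ : EuclideanSpace ℝ (Fin d) → EReal) : Prop :=
  LowerSemicontinuous φ

/-- Coercivity for extended-real-valued functions. -/
def CoerciveFn (φ : EuclideanSpace ℝ (Fin d) → EReal) : Prop :=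
  ∀ M : ℝ, ∃ R : ℝ, ∀ x, R ≤ ‖x‖ → (M : EReal) ≤ φ x

/-- Boundedness from below. -/
def BddBelowFn (φ : EuclideanSpace ℝ (Fin d) → EReal) : Prop :=
  ∃ m : ℝ, ∀ x, (m : EReal) ≤ φ x

lemma coe_fin {φ : EuclideanSpace ℝ (Fin d) → EReal} (hp : IsProperFn φ)
    {x : EuclideanSpace ℝ (Fin d)} (hx : x ∈ edom φ) :
    ((fin φ x : ℝ) : EReal) = φ x := EReal.coe_toReal hx (hp.1 x)

lemma convex_combo_le {φ : EuclideanSpace ℝ (Fin d) → EReal} (hp : IsProperFn φ)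
    (hc : IsConvexFn φ) {x y : EuclideanSpace ℝ (Fin d)} (hx : x ∈ edom φ) (hy : y ∈ edom φ)
    {a b : ℝ} (ha : 0 ≤ a) (hb : 0 ≤ b) (hab : a + b = 1) :
    φ (a • x + b • y) ≤ ((a * fin φ x + b * fin φ y : ℝ) : EReal) := by
  have h := hc x y a b ha hb hab
  rwa [← coe_fin hp hx, ← coe_fin hp hy, ← EReal.coe_mul, ← EReal.coe_mul, ← EReal.coe_add] at h

lemma fin_combo_le {φ : EuclideanSpace ℝ (Fin d) → EReal} (hp : IsProperFn φ)
    (hc : IsConvexFn φ) {x y : EuclideanSpace ℝ (Fin d)} (hx : x ∈ edom φ) (hy : y ∈ edom φ)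
    {a b : ℝ} (ha : 0 ≤ a) (hb : 0 ≤ b) (hab : a + b = 1) :
    fin φ (a • x + b • y) ≤ a * fin φ x + b * fin φ y := by
  have h := convex_combo_le hp hc hx hy ha hb hab
  have := EReal.toReal_le_toReal h (hp.1 _) (EReal.coe_ne_top _)
  rw [EReal.toReal_coe] at this
  simpa [fin] using this

lemma edom_convex {φ : EuclideanSpace ℝ (Fin d) → EReal} (hp : IsProperFn φ)
    (hc : IsConvexFn φ) : Convex ℝ (edom φ) := by
  intro x hx y hy a b ha hb hab
  have h := convex_combo_le hp hc hx hy ha hb hab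
  intro htop
  rw [htop] at h
  exact (EReal.coe_ne_top _) (top_le_iff.mp h)

lemma gradient_ineq {φ : EuclideanSpace ℝ (Fin d) → EReal} (hp : IsProperFn φ)
    (hc : IsConvexFn φ) {w z : EuclideanSpace ℝ (Fin d)}
    (hw : w ∈ interior (edom φ)) (hz : z ∈ edom φ)
    (hd : DifferentiableAt ℝ (fin φ) w) :
    fin φ w + ⟪gradient (fin φ) w, z - w⟫ ≤ fin φ z := by
  have hwe : w ∈ edom φ := interior_subset hw
  set v := z - w with hv
  set g : ℝ → ℝ := fun t => fin φ (w + t • v) with hg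
  have hpt : ∀ t : ℝ, w + t • v = (1 - t) • w + t • z := by
    intro t; rw [hv]; module
  have hderiv : HasDerivAt g ⟪gradient (fin φ) w, v⟫ 0 := by
    have h1 : HasFDerivAt (fin φ)
        (InnerProductSpace.toDual ℝ _ (gradient (fin φ) w)) w :=
      hasGradientAt_iff_hasFDerivAt.mp hd.hasGradientAt
    have h2 : HasDerivAt (fun t : ℝ => w + t • v) v 0 := by
      simpa using ((hasDerivAt_id (0:ℝ)).smul_const v).const_add w
    have h1' : HasFDerivAt (fin φ)
        (InnerProductSpace.toDual ℝ _ (gradient (fin φ) w)) ((fun t : ℝ => w + t • v) 0) := by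
      simpa using h1
    simpa [InnerProductSpace.toDual_apply_apply, hg, Function.comp_def] using h1'.comp_hasDerivAt 0 h2
  have hslope : ∀ t ∈ Set.Ioc (0:ℝ) 1, slope g 0 t ≤ fin φ z - fin φ w := by
    intro t ht
    have hcomb := fin_combo_le hp hc hwe hz (a := 1 - t) (b := t)
      (by linarith [ht.2]) ht.1.le (by ring)
    rw [← hpt t] at hcomb
    have : g t - g 0 ≤ t * (fin φ z - fin φ w) := by
      have hg0 : g 0 = fin φ w := by simp [hg]
      rw [hg0]
      calc g t - fin φ w ≤ ((1 - t) * fin φ w + t * fin φ z) - fin φ w := by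
            exact sub_le_sub_right hcomb _
        _ = t * (fin φ z - fin φ w) := by ring
    rw [slope_def_field, sub_zero, div_le_iff₀ ht.1, mul_comm]
    exact this
  have htend : Tendsto (slope g 0) (𝓝[>] 0) (𝓝 ⟪gradient (fin φ) w, v⟫) :=
    (hasDerivAt_iff_tendsto_slope.mp hderiv).mono_left
      (nhdsWithin_mono _ (fun x hx => ne_of_gt hx))
  have hle : ⟪gradient (fin φ) w, v⟫ ≤ fin φ z - fin φ w := by
    refine le_of_tendsto htend ?_
    filter_upwards [Ioc_mem_nhdsGT_of_mem ⟨le_refl (0:ℝ), zero_lt_one⟩] with t ht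
    exact hslope t ht
  linarith

lemma minimizer_mem_interior
    {φ ϕ : EuclideanSpace ℝ (Fin d) → EReal}
    (hφ_prop : IsProperFn φ) (hφ_closed : IsClosedFn φ) (hφ_conv : IsConvexFn φ)
    (hφ_leg : LegendreType φ)
    (hϕ_prop : IsProperFn ϕ) (hϕ_conv : IsConvexFn ϕ)
    {x₀ : EuclideanSpace ℝ (Fin d)} (hx₀i : x₀ ∈ interior (edom φ)) (hx₀ϕ : x₀ ∈ edom ϕ)
    {y : EuclideanSpace ℝ (Fin d)}
    (hmin : ∀ z, φ y + ϕ y ≤ φ z + ϕ z)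
    (hyφ : y ∈ edom φ) (hyϕ : y ∈ edom ϕ) :
    y ∈ interior (edom φ) := by
  by_contra hyint
  have hconv : Convex ℝ (edom φ) := edom_convex hφ_prop hφ_conv
  have hfront : y ∈ frontier (edom φ) := ⟨subset_closure hyφ, hyint⟩
  set v := x₀ - y with hv
  set s : ℕ → ℝ := fun k => 1 / (k + 1) with hs
  have hs_pos : ∀ k, 0 < s k := fun k => by positivity
  have hs_le : ∀ k, s k ≤ 1 := fun k => by
    rw [hs]; rw [div_le_one (by positivity)]; simp
  set x : ℕ → EuclideanSpace ℝ (Fin d) := fun k => y + s k • v with hx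
  have hxeq : ∀ k, x k = s k • x₀ + (1 - s k) • y := fun k => by
    simp only [hx, hv]; module
  have hxmem : ∀ k, x k ∈ interior (edom φ) := fun k => by
    rw [hxeq k]
    exact hconv.combo_interior_closure_mem_interior hx₀i (subset_closure hyφ)
      (hs_pos k) (by linarith [hs_le k]) (by ring)
  have hxtend : Tendsto x atTop (𝓝 y) := by
    have h1 : Tendsto (fun k : ℕ => s k • v) atTop (𝓝 ((0:ℝ) • v)) :=
      tendsto_one_div_add_atTop_nhds_zero_nat.smul_const v
    rw [zero_smul] at h1
    simpa [hx] using tendsto_const_nhds.add h1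
  have hgrad := hφ_leg.1.2.2 x y hxmem hxtend hfront
  obtain ⟨r, hr_pos, hball⟩ : ∃ r > 0, Metric.closedBall x₀ r ⊆ interior (edom φ) := by
    obtain ⟨r, hr, h⟩ := Metric.isOpen_iff.mp isOpen_interior x₀ hx₀i
    exact ⟨r/2, by linarith, (Metric.closedBall_subset_ball (by linarith)).trans h⟩
  have hcont : ContinuousOn (fin φ) (interior (edom φ)) :=
    (hφ_leg.2.convexOn).continuousOn isOpen_interior
  obtain ⟨zM, hzM, hM⟩ := (isCompact_closedBall x₀ r).exists_isMaxOn
    (Metric.nonempty_closedBall.mpr hr_pos.le) (hcont.mono hball)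
  set M := fin φ zM with hMdef
  have hlsc := hφ_closed y ((fin φ y - 1 : ℝ) : EReal) (by
    show ((fin φ y - 1 : ℝ) : EReal) < φ y
    rw [← coe_fin hφ_prop hyφ]; exact_mod_cast sub_lt_self _ one_pos)
  have hlow : ∀ᶠ k in atTop, fin φ y - 1 < fin φ (x k) := by
    filter_upwards [hxtend.eventually hlsc] with k hk
    have hmemk : x k ∈ edom φ := interior_subset (hxmem k)
    rw [← coe_fin hφ_prop hmemk] at hk
    exact_mod_cast hk
  set D : ℕ → ℝ := fun k => ⟪gradient (fin φ) (x k), v⟫ with hD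
  set B : ℕ → ℝ := fun k => M - (fin φ y - 1) - r * ‖gradient (fin φ) (x k)‖ with hB
  have hBbot : Tendsto B atTop atBot := by
    apply tendsto_atBot_add_const_left
    exact (tendsto_neg_atBot_iff.mpr (hgrad.const_mul_atTop hr_pos))
  have hDB : ∀ᶠ k in atTop, D k ≤ B k := by
    filter_upwards [hgrad.eventually_ge_atTop 1, hlow,
      hBbot.eventually_lt_atBot 0,
      eventually_ge_atTop 1] with k hgk hlk hBk hk1
    set g := gradient (fin φ) (x k) with hgdef
    have hgne : g ≠ 0 := fun h => by simp [h] at hgk; linarith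
    have hgnorm : (0:ℝ) < ‖g‖ := by positivity
    set z := x₀ + (r / ‖g‖) • g with hzdef
    have hzball : z ∈ Metric.closedBall x₀ r := by
      rw [Metric.mem_closedBall, dist_eq_norm]
      have : z - x₀ = (r / ‖g‖) • g := by rw [hzdef]; abel
      rw [this, norm_smul]
      rw [Real.norm_eq_abs, abs_of_pos (by positivity)]
      field_simp
      exact le_rfl
    have hgi := gradient_ineq hφ_prop hφ_conv (hxmem k)
      (interior_subset (hball hzball)) (hφ_leg.1.2.1 _ (hxmem k))
    have hinner : ⟪g, z - x k⟫ = (1 - s k) * D k + r * ‖g‖ := by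
      have hzx : z - x k = (1 - s k) • v + (r / ‖g‖) • g := by
        rw [hzdef, hxeq k, hv]; module
      rw [hzx, inner_add_right, real_inner_smul_right, real_inner_smul_right,
        real_inner_self_eq_norm_sq]
      rw [hD]
      field_simp
      ring
    have hfz : fin φ z ≤ M := hM hzball
    have h1 : (1 - s k) * D k ≤ B k := by
      rw [hB]
      have := hgi
      rw [hinner] at this
      have h2 : fin φ y - 1 < fin φ (x k) := hlk
      simp only [hgdef] at *
      linarith
    have hs2 : s k ≤ 1 / 2 := by
      rw [hs]
      have h2 : (2:ℝ) ≤ (k:ℝ) + 1 := by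
        have : (1:ℝ) ≤ (k:ℝ) := by exact_mod_cast hk1
        linarith
      exact one_div_le_one_div_of_le two_pos h2
    nlinarith [hs_pos k, hs_le k]
  -- choose k
  have hyϕfin : ((fin ϕ y : ℝ) : EReal) = ϕ y := coe_fin hϕ_prop hyϕ
  set T : ℝ := fin ϕ y - fin ϕ x₀ with hT
  obtain ⟨k, hk1, hDk⟩ : ∃ k, 1 ≤ k ∧ D k < T := by
    have := (hBbot.eventually_lt_atBot T).and (eventually_ge_atTop 1)
    obtain ⟨k, hk⟩ := (this.and hDB).exists
    exact ⟨k, hk.1.2, lt_of_le_of_lt hk.2 hk.1.1⟩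
  have hsk1 : s k < 1 := by
    rw [hs, div_lt_one (by positivity)]
    have : (1:ℝ) ≤ (k:ℝ) := by exact_mod_cast hk1
    linarith
  -- gradient inequality with z = y
  have hgi2 := gradient_ineq hφ_prop hφ_conv (hxmem k) hyφ (hφ_leg.1.2.1 _ (hxmem k))
  have hyx : y - x k = (-(s k)) • v := by rw [hx]; module
  have hinner2 : ⟪gradient (fin φ) (x k), y - x k⟫ = -(s k) * D k := by
    rw [hyx, real_inner_smul_right, hD]
  rw [hinner2] at hgi2
  have hφk : fin φ (x k) ≤ fin φ y + s k * D k := by linarith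
  have hϕE := convex_combo_le hϕ_prop hϕ_conv hx₀ϕ hyϕ
    (hs_pos k).le (by linarith) (by ring : s k + (1 - s k) = 1)
  rw [← hxeq k] at hϕE
  have hxkϕ : x k ∈ edom ϕ := fun htop => by
    rw [htop] at hϕE; exact EReal.coe_ne_top _ (top_le_iff.mp hϕE)
  have hϕk : fin ϕ (x k) ≤ s k * fin ϕ x₀ + (1 - s k) * fin ϕ y := by
    have := EReal.toReal_le_toReal hϕE (hϕ_prop.1 _) (EReal.coe_ne_top _)
    rw [EReal.toReal_coe] at this
    simpa [fin] using this
  -- contradiction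
  have hxkφ : x k ∈ edom φ := interior_subset (hxmem k)
  have hsum : φ (x k) + ϕ (x k)
      ≤ (((fin φ y + s k * D k) + (s k * fin ϕ x₀ + (1 - s k) * fin ϕ y) : ℝ) : EReal) := by
    rw [← coe_fin hφ_prop hxkφ, ← coe_fin hϕ_prop hxkϕ, ← EReal.coe_add]
    exact_mod_cast add_le_add hφk hϕk
  have hlt : ((fin φ y + s k * D k) + (s k * fin ϕ x₀ + (1 - s k) * fin ϕ y) : ℝ)
      < fin φ y + fin ϕ y := by nlinarith [hs_pos k]
  have hfin : φ y + ϕ y = ((fin φ y + fin ϕ y : ℝ) : EReal) := by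
    rw [EReal.coe_add, coe_fin hφ_prop hyφ, coe_fin hϕ_prop hyϕ]
  have : φ (x k) + ϕ (x k) < φ y + ϕ y := by
    rw [hfin]
    exact lt_of_le_of_lt hsum (by exact_mod_cast hlt)
  exact absurd (hmin (x k)) (not_le.mpr this)

lemma lsc_exists_min {f : EuclideanSpace ℝ (Fin d) → EReal} (hf : LowerSemicontinuous f)
    {S : Set (EuclideanSpace ℝ (Fin d))} (hS : IsCompact S) (hne : S.Nonempty) :
    ∃ y ∈ S, ∀ z ∈ S, f y ≤ f z := by
  haveI : Nonempty S := hne.to_subtype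
  set t : S → Set (EuclideanSpace ℝ (Fin d)) :=
    fun z => S ∩ f ⁻¹' Set.Iic (f z) with ht
  have hclosed : ∀ z : S, IsClosed (t z) :=
    fun z => hS.isClosed.inter (hf.isClosed_preimage _)
  have hcomp : ∀ z : S, IsCompact (t z) :=
    fun z => hS.inter_right (hf.isClosed_preimage _)
  have hnonempty : ∀ z : S, (t z).Nonempty := fun z => ⟨z, z.2, Set.mem_preimage.mpr (Set.mem_Iic.mpr (le_refl _))⟩
  have hdir : Directed (· ⊇ ·) t := by
    intro i j
    rcases le_total (f i) (f j) with h | h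
    · exact ⟨i, subset_rfl, fun x hx => ⟨hx.1, le_trans hx.2 h⟩⟩
    · exact ⟨j, fun x hx => ⟨hx.1, le_trans hx.2 h⟩, subset_rfl⟩
  obtain ⟨y, hy⟩ := IsCompact.nonempty_iInter_of_directed_nonempty_isCompact_isClosed
    t hdir hnonempty hcomp hclosed
  rw [Set.mem_iInter] at hy
  refine ⟨y, (hy (Classical.arbitrary S)).1, fun z hz => (hy ⟨z, hz⟩).2⟩

/-- Existence, uniqueness and location of the minimizer of the sum of a closed
Legendre-type function `φ` and a proper closed convex function `ϕ` whose domain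
meets the interior of the domain of `φ`, when one of the two is coercive and the
other is bounded below. -/
theorem legendre_sum_unique_minimizer
    (φ ϕ : EuclideanSpace ℝ (Fin d) → EReal)
    (hφ_prop : IsProperFn φ) (hφ_closed : IsClosedFn φ) (hφ_conv : IsConvexFn φ)
    (hφ_leg : LegendreType φ)
    (hϕ_prop : IsProperFn ϕ) (hϕ_closed : IsClosedFn ϕ) (hϕ_conv : IsConvexFn ϕ)
    (hdom : (interior (edom φ) ∩ edom ϕ).Nonempty)
    (hcb : (CoerciveFn φ ∧ BddBelowFn ϕ) ∨ (CoerciveFn ϕ ∧ BddBelowFn φ)) :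
    ∃ y : EuclideanSpace ℝ (Fin d),
      (∀ z, φ y + ϕ y ≤ φ z + ϕ z) ∧
      y ∈ interior (edom φ) ∩ edom ϕ ∧
      (∀ z, (∀ w, φ z + ϕ z ≤ φ w + ϕ w) → z = y) := by
  obtain ⟨x₀, hx₀i, hx₀ϕ⟩ := hdom
  have hx₀φ : x₀ ∈ edom φ := interior_subset hx₀i
  set f : EuclideanSpace ℝ (Fin d) → EReal := fun x => φ x + ϕ x with hf
  have hf_lsc : LowerSemicontinuous f :=
    hφ_closed.add' hϕ_closed
      (fun x => EReal.continuousAt_add (Or.inr (hϕ_prop.1 x)) (Or.inl (hφ_prop.1 x)))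
  set c : ℝ := fin φ x₀ + fin ϕ x₀ with hcdef
  have hc_eq : f x₀ = ((c : ℝ) : EReal) := by
    rw [hf]
    simp only [hcdef]
    rw [EReal.coe_add, coe_fin hφ_prop hx₀φ, coe_fin hϕ_prop hx₀ϕ]
  have hcoer : ∃ R : ℝ, ∀ x, R ≤ ‖x‖ → (c : EReal) < f x := by
    rcases hcb with ⟨hco, m, hm⟩ | ⟨hco, m, hm⟩
    · obtain ⟨R, hR⟩ := hco (c + 1 - m)
      refine ⟨R, fun x hx => ?_⟩
      calc (c : EReal) < ((c + 1 : ℝ) : EReal) := by exact_mod_cast lt_add_one c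
        _ = ((c + 1 - m : ℝ) : EReal) + ((m : ℝ) : EReal) := by
            rw [← EReal.coe_add]; norm_num
        _ ≤ φ x + ϕ x := add_le_add (hR x hx) (hm x)
    · obtain ⟨R, hR⟩ := hco (c + 1 - m)
      refine ⟨R, fun x hx => ?_⟩
      calc (c : EReal) < ((c + 1 : ℝ) : EReal) := by exact_mod_cast lt_add_one c
        _ = ((m : ℝ) : EReal) + ((c + 1 - m : ℝ) : EReal) := by
            rw [← EReal.coe_add]; norm_num
        _ ≤ φ x + ϕ x := add_le_add (hm x) (hR x hx)
  obtain ⟨R, hR⟩ := hcoer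
  set S : Set (EuclideanSpace ℝ (Fin d)) := f ⁻¹' Set.Iic ((c : ℝ) : EReal) with hS
  have hx₀S : x₀ ∈ S := by rw [hS, Set.mem_preimage, hc_eq]; exact Set.mem_Iic.mpr (le_refl _)
  have hSsub : S ⊆ Metric.closedBall 0 R := by
    intro x hx
    rw [Metric.mem_closedBall, dist_zero_right]
    by_contra h
    exact absurd hx (not_le.mpr (hR x (le_of_not_ge h)))
  have hScomp : IsCompact S :=
    (isCompact_closedBall 0 R).of_isClosed_subset (hf_lsc.isClosed_preimage _) hSsub
  obtain ⟨y, hyS, hymin⟩ := lsc_exists_min hf_lsc hScomp ⟨x₀, hx₀S⟩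
  have hmin : ∀ z, f y ≤ f z := by
    intro z
    by_cases hz : z ∈ S
    · exact hymin z hz
    · exact le_trans (le_trans (hymin x₀ hx₀S) (le_of_eq hc_eq))
        (le_of_lt (lt_of_not_ge hz))
  have hedom : ∀ {w : EuclideanSpace ℝ (Fin d)}, f w ≤ ((c:ℝ):EReal) →
      w ∈ edom φ ∧ w ∈ edom ϕ := by
    intro w hw
    constructor
    · intro htop
      rw [hf] at hw
      simp only at hw
      rw [htop, EReal.top_add_of_ne_bot (hϕ_prop.1 w)] at hw
      exact EReal.coe_ne_top _ (top_le_iff.mp hw)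
    · intro htop
      rw [hf] at hw
      simp only at hw
      rw [htop, add_comm, EReal.top_add_of_ne_bot (hφ_prop.1 w)] at hw
      exact EReal.coe_ne_top _ (top_le_iff.mp hw)
  obtain ⟨hyφ, hyϕ⟩ := hedom hyS
  have hyint : y ∈ interior (edom φ) :=
    minimizer_mem_interior hφ_prop hφ_closed hφ_conv hφ_leg hϕ_prop hϕ_conv
      hx₀i hx₀ϕ hmin hyφ hyϕ
  refine ⟨y, hmin, ⟨hyint, hyϕ⟩, ?_⟩
  intro z hz
  have hzS : f z ≤ ((c:ℝ):EReal) := le_trans (hz x₀) (le_of_eq hc_eq)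
  obtain ⟨hzφ, hzϕ⟩ := hedom hzS
  have hzint : z ∈ interior (edom φ) :=
    minimizer_mem_interior hφ_prop hφ_closed hφ_conv hφ_leg hϕ_prop hϕ_conv
      hx₀i hx₀ϕ hz hzφ hzϕ
  by_contra hne
  have hzy : f z = f y := le_antisymm (hz y) (hmin z)
  have hreal : fin φ z + fin ϕ z = fin φ y + fin ϕ y := by
    have h1 : f z = ((fin φ z + fin ϕ z : ℝ) : EReal) := by
      rw [hf]; simp only
      rw [EReal.coe_add, coe_fin hφ_prop hzφ, coe_fin hϕ_prop hzϕ]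
    have h2 : f y = ((fin φ y + fin ϕ y : ℝ) : EReal) := by
      rw [hf]; simp only
      rw [EReal.coe_add, coe_fin hφ_prop hyφ, coe_fin hϕ_prop hyϕ]
    rw [h1, h2] at hzy
    exact_mod_cast hzy
  set mpt := (1/2 : ℝ) • z + (1/2 : ℝ) • y with hmpt
  have hmi : mpt ∈ interior (edom φ) :=
    (edom_convex hφ_prop hφ_conv).interior hzint hyint (by norm_num) (by norm_num)
      (by norm_num)
  have hstrict : fin φ mpt < (1/2 : ℝ) * fin φ z + (1/2 : ℝ) * fin φ y :=
    hφ_leg.2.2 hzint hyint hne (by norm_num) (by norm_num) (by norm_num)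
  have hϕE := convex_combo_le hϕ_prop hϕ_conv hzϕ hyϕ
    (by norm_num : (0:ℝ) ≤ 1/2) (by norm_num : (0:ℝ) ≤ 1/2) (by norm_num)
  have hmϕ : mpt ∈ edom ϕ := fun htop => by
    rw [hmpt] at htop
    rw [htop] at hϕE
    exact EReal.coe_ne_top _ (top_le_iff.mp hϕE)
  have hϕm : fin ϕ mpt ≤ (1/2 : ℝ) * fin ϕ z + (1/2 : ℝ) * fin ϕ y := by
    have := EReal.toReal_le_toReal hϕE (hϕ_prop.1 _) (EReal.coe_ne_top _)
    rw [EReal.toReal_coe] at this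
    rw [hmpt]
    simpa [fin] using this
  have hmφ : mpt ∈ edom φ := interior_subset hmi
  have hflt : f mpt < f y := by
    have h2 : f y = ((fin φ y + fin ϕ y : ℝ) : EReal) := by
      rw [hf]; simp only
      rw [EReal.coe_add, coe_fin hφ_prop hyφ, coe_fin hϕ_prop hyϕ]
    have h3 : f mpt = ((fin φ mpt + fin ϕ mpt : ℝ) : EReal) := by
      rw [hf]; simp only
      rw [EReal.coe_add, coe_fin hφ_prop hmφ, coe_fin hϕ_prop hmϕ]
    rw [h2, h3]
    have : fin φ mpt + fin ϕ mpt < fin φ y + fin ϕ y := by linarith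
    exact_mod_cast this
  exact absurd (hmin mpt) (not_le.mpr hflt)
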